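/- Under current-action sufficiency and lag overlap, for each fixed action a, the conditional expectation E[π₀(a|X)·w_k(X⁽ᵏ⁾,a) − π_θ(a|X) | X⁽ᵏ⁾] = 0 almost surely, where w_k(x⁽ᵏ⁾,a) = π̄_θ,k(a|x⁽ᵏ⁾)/π̄₀,k(a|x⁽ᵏ⁾). -/

import Mathlib

open MeasureTheory

/-- Auxiliary lemma: the core computation with abstract sub-σ-algebras. -/
lemma stmt_10_aux {Ω : Type*} {mk m2 m0 : MeasurableSpace Ω}
    (hmk : mk ≤ m0) (hm2 : m2 ≤ m0) (hmk2 : mk ≤ m2)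
    (μ : Measure Ω) [IsProbabilityMeasure μ]
    (ind piθX pi0X wkX : Ω → ℝ)
    (hind_meas : Measurable ind) (hind01 : ∀ ω, ind ω = 0 ∨ ind ω = 1)
    (hP0 : pi0X =ᵐ[μ] μ[ind|m2])
    (hWform : wkX =ᵐ[μ]
      fun ω => if (μ[ind|mk]) ω = 0 then 0 else (μ[piθX|mk]) ω / (μ[ind|mk]) ω)
    (hz : ∀ᵐ ω ∂μ, (μ[ind|mk]) ω = 0 → (μ[piθX|mk]) ω = 0) :
    μ[(fun ω => pi0X ω * wkX ω - piθX ω) | mk] =ᵐ[μ] 0 := by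
  have hind_nonneg : 0 ≤ᵐ[μ] ind := by
    filter_upwards with ω
    rcases hind01 ω with h | h <;> simp [h]
  have hind_le1 : ind ≤ᵐ[μ] fun _ => (1 : ℝ) := by
    filter_upwards with ω
    rcases hind01 ω with h | h <;> simp [h]
  have hind_int : Integrable ind μ := by
    refine (integrable_const (1 : ℝ)).mono' hind_meas.aestronglyMeasurable ?_
    filter_upwards with ω
    rcases hind01 ω with h | h <;> simp [h]
  set P0 : Ω → ℝ := μ[ind | m2] with hP0_def
  set B0 : Ω → ℝ := μ[ind | mk] with hB0_def
  set Bθ : Ω → ℝ := μ[piθX | mk] with hBθ_def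
  have hB0_sm : StronglyMeasurable[mk] B0 := stronglyMeasurable_condExp
  have hBθ_sm : StronglyMeasurable[mk] Bθ := stronglyMeasurable_condExp
  have hB0_meas : Measurable[mk] B0 := hB0_sm.measurable
  have hBθ_meas : Measurable[mk] Bθ := hBθ_sm.measurable
  set W : Ω → ℝ := fun ω => if B0 ω = 0 then 0 else Bθ ω / B0 ω with hW_def
  have hW_meas : Measurable[mk] W :=
    Measurable.ite (hB0_meas (measurableSet_singleton 0)) measurable_const
      (hBθ_meas.div hB0_meas)
  have hW_sm : StronglyMeasurable[mk] W := hW_meas.stronglyMeasurable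
  -- key identity: W * B0 = Bθ a.e.
  have hWB : (fun ω => W ω * B0 ω) =ᵐ[μ] Bθ := by
    filter_upwards [hz] with ω hzω
    by_cases h : B0 ω = 0
    · simp [hW_def, h, hzω h]
    · simp [hW_def, h, div_mul_cancel₀ _ h]
  have hP0_nonneg : 0 ≤ᵐ[μ] P0 := condExp_nonneg hind_nonneg
  have hB0_nonneg : 0 ≤ᵐ[μ] B0 := condExp_nonneg hind_nonneg
  -- Integrability of W * P0
  have hWP0_int : Integrable (W * P0) μ := by
    constructor
    · exact ((hW_sm.mono hmk).mul (stronglyMeasurable_condExp.mono hm2)).aestronglyMeasurable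
    · have hP0_meas : Measurable P0 := (stronglyMeasurable_condExp.mono hm2).measurable
      have hB0_meas' : Measurable B0 := hB0_meas.mono hmk le_rfl
      have hWenn : Measurable[mk] fun ω => (‖W ω‖₊ : ENNReal) := measurable_enorm.comp hW_meas
      set ν1 : Measure Ω := μ.withDensity (fun ω => ENNReal.ofReal (P0 ω)) with hν1
      set ν2 : Measure Ω := μ.withDensity (fun ω => ENNReal.ofReal (B0 ω)) with hν2
      have hν_eq : ν1.trim hmk = ν2.trim hmk := by
        refine @Measure.ext Ω mk _ _ fun s hs => ?_
        rw [trim_measurableSet_eq hmk hs, trim_measurableSet_eq hmk hs,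
          withDensity_apply _ (hmk s hs), withDensity_apply _ (hmk s hs),
          ← ofReal_integral_eq_lintegral_ofReal
            (integrable_condExp.integrableOn) (ae_restrict_of_ae hP0_nonneg),
          ← ofReal_integral_eq_lintegral_ofReal
            (integrable_condExp.integrableOn) (ae_restrict_of_ae hB0_nonneg)]
        congr 1
        rw [setIntegral_condExp hm2 hind_int (hmk2 s hs),
          setIntegral_condExp hmk hind_int hs]
      have key : ∫⁻ ω, (‖W ω‖₊ : ENNReal) * ENNReal.ofReal (P0 ω) ∂μ
          = ∫⁻ ω, (‖W ω‖₊ : ENNReal) * ENNReal.ofReal (B0 ω) ∂μ := by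
        have h1 : ∫⁻ ω, (‖W ω‖₊ : ENNReal) * ENNReal.ofReal (P0 ω) ∂μ
            = ∫⁻ ω, (‖W ω‖₊ : ENNReal) ∂ν1 := by
          rw [hν1, lintegral_withDensity_eq_lintegral_mul μ
            hP0_meas.ennreal_ofReal (hWenn.mono hmk le_rfl)]
          simp [Function.comp, mul_comm]
        have h2 : ∫⁻ ω, (‖W ω‖₊ : ENNReal) * ENNReal.ofReal (B0 ω) ∂μ
            = ∫⁻ ω, (‖W ω‖₊ : ENNReal) ∂ν2 := by
          rw [hν2, lintegral_withDensity_eq_lintegral_mul μ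
            hB0_meas'.ennreal_ofReal (hWenn.mono hmk le_rfl)]
          simp [Function.comp, mul_comm]
        rw [h1, h2, ← lintegral_trim hmk hWenn, ← lintegral_trim hmk hWenn, hν_eq]
      rw [hasFiniteIntegral_iff_norm]
      have hnorm : ∫⁻ ω, ENNReal.ofReal ‖(W * P0) ω‖ ∂μ
          = ∫⁻ ω, (‖(W * P0) ω‖₊ : ENNReal) ∂μ := by
        simp_rw [← Real.enorm_eq_ofReal (norm_nonneg _), enorm_eq_nnnorm, nnnorm_norm]
      rw [hnorm]
      calc ∫⁻ ω, (‖(W * P0) ω‖₊ : ENNReal) ∂μ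
          ≤ ∫⁻ ω, (‖W ω‖₊ : ENNReal) * ENNReal.ofReal (P0 ω) ∂μ := by
            refine lintegral_mono_ae ?_
            filter_upwards [hP0_nonneg] with ω h0
            simp only [Pi.mul_apply, nnnorm_mul, ENNReal.coe_mul]
            gcongr
            rw [← Real.enorm_eq_ofReal h0, enorm_eq_nnnorm]
        _ = ∫⁻ ω, (‖W ω‖₊ : ENNReal) * ENNReal.ofReal (B0 ω) ∂μ := key
        _ = ∫⁻ ω, (‖Bθ ω‖₊ : ENNReal) ∂μ := by
            refine lintegral_congr_ae ?_
            filter_upwards [hWB, hB0_nonneg] with ω hωB h0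
            rw [← hωB, ← Real.enorm_eq_ofReal h0, enorm_eq_nnnorm, ← ENNReal.coe_mul, ← nnnorm_mul]
        _ < ⊤ := integrable_condExp.hasFiniteIntegral
  by_cases hInt : Integrable (fun ω => pi0X ω * wkX ω - piθX ω) μ
  · have hfae : (fun ω => pi0X ω * wkX ω - piθX ω)
        =ᵐ[μ] fun ω => W ω * P0 ω - piθX ω := by
      filter_upwards [hP0, hWform] with ω h1 h2
      simp only [h1, h2, hW_def]
      ring
    have hpiθ_int : Integrable piθX μ := by
      refine (hWP0_int.sub (hInt.congr hfae)).congr ?_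
      filter_upwards [hfae] with ω h
      simp only [Pi.sub_apply, Pi.mul_apply, h]
      ring
    calc μ[(fun ω => pi0X ω * wkX ω - piθX ω) | mk]
        =ᵐ[μ] μ[W * P0 - piθX | mk] := condExp_congr_ae hfae
      _ =ᵐ[μ] μ[W * P0 | mk] - μ[piθX | mk] := condExp_sub hWP0_int hpiθ_int mk
      _ =ᵐ[μ] fun ω => W ω * (μ[P0 | mk]) ω - Bθ ω := by
          filter_upwards [condExp_mul_of_stronglyMeasurable_left hW_sm hWP0_int integrable_condExp]
            with ω h
          simp only [Pi.sub_apply, h, Pi.mul_apply, hBθ_def]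
      _ =ᵐ[μ] fun ω => W ω * B0 ω - Bθ ω := by
          filter_upwards [condExp_condExp_of_le (f := ind) hmk2 hm2] with ω h
          rw [hP0_def, hB0_def, h]
      _ =ᵐ[μ] 0 := by
          filter_upwards [hWB] with ω h
          simp [h]
  · rw [condExp_of_not_integrable hInt]

/-- Under current-action sufficiency and lag overlap (with `w_k = 0` and `π̄_θ,k = 0` on the
event `π̄₀,k = 0`), for each action `a`,
`E[π₀(a|X)·w_k(X⁽ᵏ⁾,a) − π_θ(a|X) | X⁽ᵏ⁾] = 0` a.s. -/
theorem stmt_10 {Ω 𝒳 𝒳k 𝒜 : Type*} [MeasurableSpace Ω] [MeasurableSpace 𝒳]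
    [MeasurableSpace 𝒳k] [Fintype 𝒜] [DecidableEq 𝒜] [MeasurableSpace 𝒜]
    [MeasurableSingletonClass 𝒜]
    (μ : Measure Ω) [IsProbabilityMeasure μ]
    (X : Ω → 𝒳) (Xk : Ω → 𝒳k) (A : Ω → 𝒜)
    (hX : Measurable X) (hXk : Measurable Xk) (hA : Measurable A)
    (pi0 piθ : 𝒳 → 𝒜 → ℝ) (bpiθ bpi0 : 𝒳k → 𝒜 → ℝ)
    -- current-action sufficiency: π₀(a|X) is a version of P(A = a | X, X⁽ᵏ⁾)
    (hlog : ∀ a : 𝒜, (fun ω => pi0 (X ω) a)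
      =ᵐ[μ] μ[(fun ω => if A ω = a then (1 : ℝ) else 0) |
        MeasurableSpace.comap X inferInstance ⊔ MeasurableSpace.comap Xk inferInstance])
    -- lag marginals
    (hbpiθ : ∀ a : 𝒜, (fun ω => bpiθ (Xk ω) a)
      =ᵐ[μ] μ[(fun ω => piθ (X ω) a) | MeasurableSpace.comap Xk inferInstance])
    (hbpi0 : ∀ a : 𝒜, (fun ω => bpi0 (Xk ω) a)
      =ᵐ[μ] μ[(fun ω => if A ω = a then (1 : ℝ) else 0) |
        MeasurableSpace.comap Xk inferInstance])
    -- lag overlap, and π̄_θ,k vanishes on the event {π̄₀,k = 0}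
    (hoverlap : ∀ a : 𝒜, ∀ᵐ ω ∂μ, 0 < bpiθ (Xk ω) a → 0 < bpi0 (Xk ω) a)
    (hzero : ∀ a : 𝒜, ∀ᵐ ω ∂μ, bpi0 (Xk ω) a = 0 → bpiθ (Xk ω) a = 0)
    -- weight with the convention w_k = 0 where π̄₀,k = 0
    (w : 𝒳k → 𝒜 → ℝ)
    (hw : ∀ xk a, w xk a = if bpi0 xk a = 0 then 0 else bpiθ xk a / bpi0 xk a) :
    ∀ a : 𝒜, μ[(fun ω => pi0 (X ω) a * w (Xk ω) a - piθ (X ω) a) |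
        MeasurableSpace.comap Xk inferInstance]
      =ᵐ[μ] 0 := by
  intro a
  refine stmt_10_aux (hXk.comap_le) (sup_le hX.comap_le hXk.comap_le) le_sup_right μ
    (fun ω => if A ω = a then (1 : ℝ) else 0) (fun ω => piθ (X ω) a)
    (fun ω => pi0 (X ω) a) (fun ω => w (Xk ω) a) ?_ ?_ (hlog a) ?_ ?_
  · exact Measurable.ite (hA (measurableSet_singleton a)) measurable_const measurable_const
  · intro ω; by_cases h : A ω = a <;> simp [h]
  · filter_upwards [hbpi0 a, hbpiθ a] with ω h0 hθ
    simp only [← h0, ← hθ, hw]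
  · filter_upwards [hzero a, hbpi0 a, hbpiθ a] with ω hz h0 hθ h
    rw [← hθ]
    exact hz (by rw [h0, h])
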